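/- Let a, b, m ∈ ℤ with a + b + 1 = m², f(k) = k² + ak + b, and P(k) = f(k)·f(k+1). Then for every n ≥ 1, ∏_{k=1}^{n} P(k) is a perfect square if and only if f(n+1) is a perfect square (assuming f(k) ≠ 0 for all 1 ≤ k ≤ n+1). -/

import Mathlib

theorem stmt17 (a b m : ℤ) (hm : a + b + 1 = m^2)
    (f P : ℤ → ℤ) (hf : ∀ k, f k = k^2 + a*k + b) (hP : ∀ k, P k = f k * f (k + 1))
    (n : ℤ) (hn : 1 ≤ n) (hne : ∀ k, 1 ≤ k → k ≤ n + 1 → f k ≠ 0) :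
    (∃ y : ℤ, (∏ k ∈ Finset.Icc 1 n, P k) = y^2) ↔ ∃ y : ℤ, f (n + 1) = y^2 := by
  have hf1 : f 1 = m^2 := by rw [hf]; linarith
  set Q := ∏ k ∈ Finset.Icc (2:ℤ) n, f k with hQ
  have hins : Finset.Icc (1:ℤ) n = insert 1 (Finset.Icc 2 n) := by
    ext x; simp [Finset.mem_Icc]; omega
  have h1 : ∏ k ∈ Finset.Icc (1:ℤ) n, f k = f 1 * Q := by
    rw [hins, Finset.prod_insert (by simp)]
  have h2 : ∏ k ∈ Finset.Icc (1:ℤ) n, f (k+1) = Q * f (n+1) := by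
    have hmap : Finset.Icc (2:ℤ) (n+1) = (Finset.Icc (1:ℤ) n).map
        ⟨fun k => k + 1, add_left_injective 1⟩ := by
      ext x
      simp only [Finset.mem_Icc, Finset.mem_map, Function.Embedding.coeFn_mk]
      constructor
      · intro h; exact ⟨x - 1, by omega, by ring⟩
      · rintro ⟨c, hc, rfl⟩; omega
    have e1 : ∏ k ∈ Finset.Icc (2:ℤ) (n+1), f k = Q * f (n+1) := by
      have : Finset.Icc (2:ℤ) (n+1) = insert (n+1) (Finset.Icc 2 n) := by
        ext x; simp only [Finset.mem_Icc, Finset.mem_insert]; omega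
      rw [this, Finset.prod_insert (by simp [Finset.mem_Icc]), mul_comm]
    rw [← e1, hmap, Finset.prod_map]; rfl
  have key : ∏ k ∈ Finset.Icc (1:ℤ) n, P k = f (n+1) * (m * Q)^2 := by
    have : ∏ k ∈ Finset.Icc (1:ℤ) n, P k
        = (∏ k ∈ Finset.Icc (1:ℤ) n, f k) * (∏ k ∈ Finset.Icc (1:ℤ) n, f (k+1)) := by
      rw [← Finset.prod_mul_distrib]
      exact Finset.prod_congr rfl fun k _ => hP k
    rw [this, h1, h2, hf1]; ring
  have hQne : Q ≠ 0 := by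
    rw [hQ, Finset.prod_ne_zero_iff]
    intro k hk
    rw [Finset.mem_Icc] at hk
    exact hne k (by omega) (by omega)
  have hmne : m ≠ 0 := by
    intro h
    exact hne 1 le_rfl (by omega) (by rw [hf1, h]; ring)
  have hc : m * Q ≠ 0 := mul_ne_zero hmne hQne
  constructor
  · rintro ⟨y, hy⟩
    rw [key] at hy
    have hdvd : (m * Q) ∣ y := by
      rw [← Int.pow_dvd_pow_iff (two_ne_zero)]
      exact ⟨f (n+1), by linarith [hy]⟩
    obtain ⟨z, hz⟩ := hdvd
    refine ⟨z, ?_⟩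
    have : f (n+1) * (m*Q)^2 = z^2 * (m*Q)^2 := by rw [hy, hz]; ring
    exact mul_right_cancel₀ (pow_ne_zero 2 hc) this
  · rintro ⟨y, hy⟩
    exact ⟨y * (m * Q), by rw [key, hy]; ring⟩
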